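/- Let 𝒯 be the smallest set of nonempty lists of integers containing [4] and, for every m ≥ 0, the list [3, 2, …, 2, 3] with m twos in the middle, and closed under the two operations [b_1, …, b_r] ↦ [2, b_1, …, b_{r−1}, b_r + 1] and [b_1, …, b_r] ↦ [b_1 + 1, b_2, …, b_r, 2]. Then every list L ∈ 𝒯 has all entries at least 2, and hj(L) = d·n²/(d·n·a−1) for some integers d ≥ 1 and n > a ≥ 1 with gcd(n, a) = 1. (This is the numerical content of Propositions 2.1 and 2.2(1)(2): every string generated by the rules of Proposition 2.2 is the resolution string of a cyclic quotient singularity of type (1/dn²)(1, dna−1).) -/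

import Mathlib

/-- Hirzebruch–Jung continued fraction value of a list of integers, computed in ℚ
with its total inverse: `hj [b] = b` and `hj (b :: l) = b - (hj l)⁻¹`. -/
def hj : List ℤ → ℚ
  | [] => 0
  | b :: l => (b : ℚ) - (hj l)⁻¹

/-- Add 1 to the last entry of a list of integers. -/
def addLast : List ℤ → List ℤ
  | [] => []
  | [b] => [b + 1]
  | b :: l => b :: addLast l

/-- Add 1 to the first entry of a list of integers. -/
def addHead : List ℤ → List ℤ
  | [] => []
  | b :: l => (b + 1) :: l

/-- The smallest set 𝒯 of lists of integers containing `[4]` and the lists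
`[3, 2, …, 2, 3]` (with `m ≥ 0` twos in the middle), and closed under the operations
`[b₁, …, b_r] ↦ [2, b₁, …, b_{r−1}, b_r + 1]` and `[b₁, …, b_r] ↦ [b₁ + 1, b₂, …, b_r, 2]`. -/
inductive ClassT : List ℤ → Prop
  | base : ClassT [4]
  | basePair (m : ℕ) : ClassT (3 :: (List.replicate m 2 ++ [3]))
  | left {L : List ℤ} : ClassT L → ClassT (2 :: addLast L)
  | right {L : List ℤ} : ClassT L → ClassT (addHead L ++ [2])

def quad : List ℤ → ℤ × ℤ × ℤ × ℤ
  | [] => (1, 0, 0, -1)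
  | b :: l =>
    (b * (quad l).1 - (quad l).2.1, (quad l).1,
     b * (quad l).2.2.1 - (quad l).2.2.2, (quad l).2.2.1)

lemma quad_append_two (L : List ℤ) :
    quad (L ++ [2]) = (2 * (quad L).1 - (quad L).2.2.1, 2 * (quad L).2.1 - (quad L).2.2.2,
      (quad L).1, (quad L).2.1) := by
  induction L with
  | nil => simp [quad]
  | cons b l ih =>
    show quad (b :: (l ++ [2])) = _
    simp only [quad, ih, Prod.mk.injEq, and_true, true_and]
    and_intros <;> ring

lemma quad_addLast (b : ℤ) (l : List ℤ) :
    quad (addLast (b :: l)) = ((quad (b :: l)).1 + (quad (b :: l)).2.2.1,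
      (quad (b :: l)).2.1 + (quad (b :: l)).2.2.2,
      (quad (b :: l)).2.2.1, (quad (b :: l)).2.2.2) := by
  induction l generalizing b with
  | nil =>
    show quad [b + 1] = _
    simp only [quad, Prod.mk.injEq, and_true, true_and]
    and_intros <;> ring
  | cons c m ih =>
    show quad (b :: addLast (c :: m)) = _
    simp only [quad, ih, Prod.mk.injEq, and_true, true_and]
    and_intros <;> ring

lemma quad_addHead (b : ℤ) (l : List ℤ) :
    quad (addHead (b :: l)) = ((quad (b :: l)).1 + (quad (b :: l)).2.1,
      (quad (b :: l)).2.1,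
      (quad (b :: l)).2.2.1 + (quad (b :: l)).2.2.2, (quad (b :: l)).2.2.2) := by
  simp only [addHead, quad, Prod.mk.injEq, and_true, true_and]
  and_intros <;> ring

lemma addLast_mem {L : List ℤ} (h : ∀ b ∈ L, 2 ≤ b) : ∀ b ∈ addLast L, 2 ≤ b := by
  induction L with
  | nil => simp [addLast]
  | cons b l ih =>
    cases l with
    | nil =>
      simp only [addLast, List.mem_singleton]
      rintro x rfl
      have := h b (by simp); omega
    | cons c m =>
      show ∀ x ∈ b :: addLast (c :: m), 2 ≤ x
      intro x hx
      rcases List.mem_cons.1 hx with rfl | hx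
      · exact h x (by simp)
      · exact ih (fun y hy => h y (List.mem_cons_of_mem _ hy)) x hx

lemma hj_quad (L : List ℤ) (h : ∀ b ∈ L, 2 ≤ b) :
    0 ≤ (quad L).2.1 ∧ (quad L).2.1 < (quad L).1 ∧
      hj L = ((quad L).1 : ℚ) / ((quad L).2.1 : ℚ) := by
  induction L with
  | nil => simp [quad, hj]
  | cons b l ih =>
    obtain ⟨h0, h1, h2⟩ := ih (fun y hy => h y (List.mem_cons_of_mem _ hy))
    have hb : 2 ≤ b := h b (by simp)
    have hp : (0:ℤ) < (quad l).1 := by omega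
    refine ⟨by simp [quad]; omega, by simp [quad]; nlinarith, ?_⟩
    have hpQ : ((quad l).1 : ℚ) ≠ 0 := by exact_mod_cast hp.ne'
    simp only [hj, h2, quad, inv_div]
    push_cast
    field_simp

lemma classT_ne_nil {L : List ℤ} (h : ClassT L) : L ≠ [] := by
  cases h <;> simp

lemma quad_base (m : ℕ) :
    quad (List.replicate m 2 ++ [3]) = (2 * (m:ℤ) + 3, 2 * (m:ℤ) + 1, (m:ℤ) + 1, (m:ℤ)) := by
  induction m with
  | zero => simp [quad]
  | succ k ih =>
    show quad (2 :: (List.replicate k 2 ++ [3])) = _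
    simp only [quad, ih, Prod.mk.injEq]
    push_cast
    and_intros <;> ring

lemma key {L : List ℤ} (hL : ClassT L) :
    (∀ b ∈ L, 2 ≤ b) ∧
    ∃ d n a : ℤ, 1 ≤ d ∧ a < n ∧ 1 ≤ a ∧ Int.gcd n a = 1 ∧
      quad L = (d * n ^ 2, d * n * a - 1, d * n * (n - a) - 1, d * a * (n - a) - 1) := by
  induction hL with
  | base =>
    refine ⟨by simp, 1, 2, 1, by norm_num, by norm_num, by norm_num, by decide, ?_⟩
    simp [quad]
  | basePair m =>
    constructor
    · intro b hb
      simp only [List.mem_cons, List.mem_append, List.mem_replicate,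
        List.not_mem_nil, or_false] at hb
      rcases hb with rfl | ⟨-, rfl⟩ | rfl <;> norm_num
    · refine ⟨(m:ℤ) + 2, 2, 1, by omega, by norm_num, by norm_num, by decide, ?_⟩
      simp only [quad, quad_base, Prod.mk.injEq]
      and_intros <;> ring
  | @left M hM ih =>
    obtain ⟨hmem, d, n, a, hd, han, ha, hg, hq⟩ := ih
    obtain ⟨b, l, rfl⟩ := List.exists_cons_of_ne_nil (classT_ne_nil hM)
    constructor
    · intro x hx
      rcases List.mem_cons.1 hx with rfl | hx
      · norm_num
      · exact addLast_mem hmem x hx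
    · refine ⟨d, 2 * n - a, n, hd, by omega, by omega, ?_, ?_⟩
      · rw [← Int.isCoprime_iff_gcd_eq_one] at hg ⊢
        have : IsCoprime (-a + n * 2) n := (hg.symm.neg_left).add_mul_left_left 2
        rwa [show 2 * n - a = -a + n * 2 by ring]
      · have h1 := quad_addLast b l
        rw [hq] at h1
        show quad (2 :: addLast (b :: l)) = _
        simp only [quad, h1, Prod.mk.injEq]
        and_intros <;> ring
  | @right M hM ih =>
    obtain ⟨hmem, d, n, a, hd, han, ha, hg, hq⟩ := ih
    obtain ⟨b, l, rfl⟩ := List.exists_cons_of_ne_nil (classT_ne_nil hM)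
    constructor
    · intro x hx
      rcases List.mem_append.1 hx with hx | hx
      · rcases List.mem_cons.1 (by simpa [addHead] using hx) with rfl | hx
        · have := hmem b (by simp); omega
        · exact hmem x (List.mem_cons_of_mem _ hx)
      · simp only [List.mem_singleton] at hx; omega
    · refine ⟨d, n + a, a, hd, by omega, ha, ?_, ?_⟩
      · rw [← Int.isCoprime_iff_gcd_eq_one] at hg ⊢
        have := hg.add_mul_left_left 1
        rwa [mul_one] at this
      · have h1 := quad_addHead b l
        rw [hq] at h1
        simp only [quad_append_two, h1, Prod.mk.injEq]
        and_intros <;> ring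

/-- Propositions 2.1 and 2.2(1)(2), numerically: every list in 𝒯 has all entries
at least 2, and its Hirzebruch–Jung value equals `d·n²/(d·n·a−1)` for some
`d ≥ 1` and `n > a ≥ 1` with `gcd(n, a) = 1`. -/
theorem classT_hj (L : List ℤ) (hL : ClassT L) :
    (∀ b ∈ L, 2 ≤ b) ∧
    ∃ d n a : ℤ, 1 ≤ d ∧ a < n ∧ 1 ≤ a ∧ Int.gcd n a = 1 ∧
      hj L = (d * n ^ 2 : ℚ) / (d * n * a - 1) := by
  obtain ⟨hmem, d, n, a, hd, han, ha, hg, hq⟩ := key hL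
  refine ⟨hmem, d, n, a, hd, han, ha, hg, ?_⟩
  obtain ⟨-, -, h2⟩ := hj_quad L hmem
  rw [h2, hq]
  push_cast
  ring_nf
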